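/- Let p ≥ 1 and let n = 2^p + m with 0 < m ≤ 2^p. Then for all integers k and i with 2 ≤ k ≤ m and 1 ≤ i ≤ k − 1, the sum Σ_{s=0}^{p−1} Σ_{h=0}^{m−k} C(2^s + 2(i−1) + h, n − 2^s + (i−1) − k − h) · C(m−k, h) is odd if i = 1 and even if 2 ≤ i ≤ k − 1. -/

import Mathlib

/-- The binomial coefficient `C(N, t)` with an integer lower entry, with the convention that
`C(N, t) = 0` when `t < 0` (and, as usual, when `t > N`). -/
def chooseZ (N : ℕ) (t : ℤ) : ℕ := if 0 ≤ t then N.choose t.toNat else 0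


open Polynomial

noncomputable def qq : (ZMod 2)[X] := 1 + X + X ^ 2
noncomputable def uu : (ZMod 2)[X] := 1 + X ^ 2

lemma sq_eq_expand (f : (ZMod 2)[X]) : f ^ 2 = Polynomial.expand (ZMod 2) 2 f := by
  have h := Polynomial.map_frobenius_expand 2 f
  have hfr : frobenius (ZMod 2) 2 = RingHom.id (ZMod 2) := by
    ext x; fin_cases x <;> decide
  rw [hfr, Polynomial.map_id] at h
  exact h.symm

lemma qq_natDegree : qq.natDegree ≤ 2 := by
  rw [qq]; compute_degree

lemma uu_natDegree : uu.natDegree ≤ 2 := by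
  rw [uu]; compute_degree

lemma qq_pow_natDegree (M : ℕ) : (qq ^ M).natDegree ≤ 2 * M := by
  calc (qq ^ M).natDegree ≤ M * qq.natDegree := Polynomial.natDegree_pow_le
  _ ≤ M * 2 := Nat.mul_le_mul_left M qq_natDegree
  _ = 2 * M := Nat.mul_comm M 2

lemma coeff_pow_two_mul (f : (ZMod 2)[X]) (n : ℕ) :
    (f ^ 2).coeff (2 * n) = f.coeff n := by
  rw [sq_eq_expand, Polynomial.coeff_expand (by norm_num)]
  simp [Nat.mul_div_cancel_left n (by norm_num : 0 < 2)]

lemma coeff_pow_two_odd (f : (ZMod 2)[X]) (n : ℕ) (hn : ¬ 2 ∣ n) :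
    (f ^ 2).coeff n = 0 := by
  rw [sq_eq_expand, Polynomial.coeff_expand (by norm_num), if_neg hn]

lemma qq_central (M : ℕ) : (qq ^ M).coeff M = 1 := by
  induction M using Nat.strong_induction_on with
  | _ M ih =>
    match M, ih with
    | 0, _ => simp
    | (M+1), ih =>
      rcases Nat.even_or_odd (M+1) with ⟨b, hb⟩ | ⟨b, hb⟩
      · -- M+1 = 2b
        have hb' : M + 1 = 2 * b := by omega
        have hblt : b < M + 1 := by omega
        rw [hb', pow_mul', coeff_pow_two_mul, ih b hblt]
      · -- M+1 = 2b+1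
        have hb' : M + 1 = 2 * b + 1 := by omega
        have hblt : b < M + 1 := by omega
        have hE : qq ^ (M+1) = qq * (qq ^ b) ^ 2 := by
          rw [hb', pow_succ, pow_mul', mul_comm]
        rw [hE, hb']
        have : qq * (qq^b)^2 = (qq^b)^2 + X * (qq^b)^2 + X^2 * (qq^b)^2 := by
          rw [qq]; ring
        rw [this]
        simp only [Polynomial.coeff_add]
        rw [coeff_pow_two_odd _ _ (by omega)]
        have h1 : (X * (qq^b)^2).coeff (2*b+1) = ((qq^b)^2).coeff (2*b) := by
          rw [Polynomial.coeff_X_mul]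
        have h2 : (X^2 * (qq^b)^2).coeff (2*b+1) = 0 := by
          rw [(Polynomial.commute_X_pow _ 2).eq, Polynomial.coeff_mul_X_pow']
          rcases Nat.lt_or_ge (2*b+1) 2 with h | h
          · rw [if_neg (by omega)]
          · rw [if_pos (by omega), coeff_pow_two_odd _ _ (by omega)]
        rw [h1, h2, coeff_pow_two_mul, ih b hblt]
        ring

lemma qq_reflect : Polynomial.reflect 2 qq = qq := by
  have e : qq = X ^ 0 + X ^ 1 + X ^ 2 := by rw [qq]; ring
  rw [e, Polynomial.reflect_add, Polynomial.reflect_add,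
    Polynomial.reflect_monomial, Polynomial.reflect_monomial,
    Polynomial.reflect_monomial,
    Polynomial.revAt_le (by omega : (0:ℕ) ≤ 2),
    Polynomial.revAt_le (by omega : (1:ℕ) ≤ 2),
    Polynomial.revAt_le (by omega : (2:ℕ) ≤ 2)]
  ring

lemma qq_pow_reflect (M : ℕ) : Polynomial.reflect (2 * M) (qq ^ M) = qq ^ M := by
  induction M with
  | zero => simp
  | succ M ih =>
    have : qq ^ (M+1) = qq * qq ^ M := by ring
    rw [this, show 2 * (M+1) = 2 + 2 * M by ring,
      Polynomial.reflect_mul _ _ qq_natDegree (qq_pow_natDegree M), qq_reflect, ih]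

lemma qq_sym (M d : ℕ) (hd : d ≤ M) :
    (qq ^ M).coeff (M + d) = (qq ^ M).coeff (M - d) := by
  conv_lhs => rw [← qq_pow_reflect M]
  rw [Polynomial.coeff_reflect, Polynomial.revAt_le (by omega)]
  congr 1
  omega

lemma central_binom_even (t : ℕ) (ht : 1 ≤ t) : ((2*t).choose t : ZMod 2) = 0 := by
  obtain ⟨b, rfl⟩ := Nat.exists_eq_add_of_le ht
  have h : (2 * (1+b)).choose (1+b) = (2*(1+b)-1).choose b + (2*(1+b)-1).choose (1+b) := by
    have e : 2 * (1+b) = (2*(1+b)-1) + 1 := by omega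
    have e2 : 1 + b = b + 1 := by omega
    rw [e, e2, Nat.choose_succ_succ]
    congr 1
  have hsym : (2*(1+b)-1).choose b = (2*(1+b)-1).choose (1+b) := by
    rw [← Nat.choose_symm (by omega : 1 + b ≤ 2*(1+b)-1)]
    congr 1
    omega
  rw [h, hsym]
  push_cast
  ring_nf
  rw [show (2 : ZMod 2) = 0 by decide]
  ring

lemma uu_pow (a : ℕ) : uu ^ a = ∑ t ∈ Finset.range (a+1), (a.choose t : ZMod 2) • X ^ (2*t) := by
  rw [uu, add_comm]
  rw [add_pow]
  apply Finset.sum_congr rfl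
  intro t ht
  rw [one_pow, mul_one, ← pow_mul, smul_eq_C_mul]
  rw [Polynomial.C_eq_natCast]
  ring

lemma main_coeff (a M : ℕ) :
    (uu ^ a * qq ^ M).coeff (a + M) = if a = 0 then 1 else 0 := by
  rcases Nat.eq_zero_or_pos a with rfl | ha
  · simp [qq_central M]
  rw [if_neg (by omega)]
  rw [uu_pow, Finset.sum_mul, Polynomial.finset_sum_coeff]
  apply Finset.sum_involution (fun t _ => a - t)
  · -- f t + f (a - t) = 0
    intro t ht
    simp only [Finset.mem_range] at ht
    have hta : t ≤ a := by omega
    have key : ((a.choose t : ZMod 2) • X ^ (2*t) * qq ^ M).coeff (a+M)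
        = (a.choose t : ZMod 2) * (if 2*t ≤ a + M then (qq ^ M).coeff (a + M - 2*t) else 0) := by
      rw [smul_mul_assoc, Polynomial.coeff_smul, smul_eq_mul]
      congr 1
      rw [(Polynomial.commute_X_pow _ (2*t)).eq, Polynomial.coeff_mul_X_pow']
    have key2 : ((a.choose (a-t) : ZMod 2) • X ^ (2*(a-t)) * qq ^ M).coeff (a+M)
        = (a.choose (a-t) : ZMod 2) * (if 2*(a-t) ≤ a + M then (qq ^ M).coeff (a + M - 2*(a-t)) else 0) := by
      rw [smul_mul_assoc, Polynomial.coeff_smul, smul_eq_mul]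
      congr 1
      rw [(Polynomial.commute_X_pow _ (2*(a-t))).eq, Polynomial.coeff_mul_X_pow']
    rw [key, key2, Nat.choose_symm hta]
    have hval : (if 2*t ≤ a + M then (qq ^ M).coeff (a + M - 2*t) else 0)
        = (if 2*(a-t) ≤ a + M then (qq ^ M).coeff (a + M - 2*(a-t)) else 0) := by
      have hdeg : ∀ e, 2 * M < e → (qq ^ M).coeff e = 0 := fun e he =>
        Polynomial.coeff_eq_zero_of_natDegree_lt (lt_of_le_of_lt (qq_pow_natDegree M) he)
      rcases le_or_gt (2*t) (a+M) with h1 | h1 <;> rcases le_or_gt (2*(a-t)) (a+M) with h2 | h2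
      · rw [if_pos h1, if_pos h2]
        rcases le_or_gt (2*t) a with hc | hc
        · -- a + M - 2t = M + (a - 2t), a + M - 2(a-t) = M - (a-2t)
          have d := a - 2*t
          rw [show a + M - 2*t = M + (a - 2*t) by omega,
            show a + M - 2*(a-t) = M - (a - 2*t) by omega]
          exact qq_sym M (a - 2*t) (by omega)
        · rw [show a + M - 2*t = M - (2*t - a) by omega,
            show a + M - 2*(a-t) = M + (2*t - a) by omega]
          exact (qq_sym M (2*t - a) (by omega)).symm
      · rw [if_pos h1, if_neg (by omega)]
        apply hdeg; omega
      · rw [if_neg (by omega), if_pos h2]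
        rw [eq_comm]; apply hdeg; omega
      · rw [if_neg (by omega), if_neg (by omega)]
    rw [hval]
    exact CharTwo.add_self_eq_zero _
  · -- f t ≠ 0 → a - t ≠ t
    intro t ht hf
    simp only [Finset.mem_range] at ht
    intro heq
    have hta : t ≤ a := by omega
    have h2t : a = 2 * t := by omega
    have ht1 : 1 ≤ t := by omega
    apply hf
    rw [smul_mul_assoc, Polynomial.coeff_smul, h2t, central_binom_even t ht1]
    simp
  · intro t ht
    simp only [Finset.mem_range] at ht ⊢
    omega
  · intro t ht
    simp only [Finset.mem_range] at ht
    omega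

lemma inner_coeff (A B M : ℕ) (hMB : M ≤ B) :
    (((1 + X : (ZMod 2)[X]) ^ A) * qq ^ M).coeff B
      = ∑ h ∈ Finset.range (M+1), (M.choose h : ZMod 2) * ((A+h).choose (B-h) : ZMod 2) := by
  have hq : qq = (X + X^2) + 1 := by rw [qq]; ring
  have hqpow : qq ^ M = ∑ h ∈ Finset.range (M+1),
      X ^ h * (1 + X) ^ h * (M.choose h : (ZMod 2)[X]) := by
    rw [hq, add_pow]
    apply Finset.sum_congr rfl
    intro h _
    rw [one_pow, mul_one]
    congr 1
    rw [show (X + X^2 : (ZMod 2)[X]) = X * (1 + X) by ring, mul_pow]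
  rw [hqpow, Finset.mul_sum, Polynomial.finset_sum_coeff]
  apply Finset.sum_congr rfl
  intro h hh
  simp only [Finset.mem_range] at hh
  have hhB : h ≤ B := by omega
  have e : (1 + X : (ZMod 2)[X]) ^ A * (X ^ h * (1 + X) ^ h * (M.choose h : (ZMod 2)[X]))
      = (M.choose h : (ZMod 2)[X]) * (X ^ h * (1 + X) ^ (A + h)) := by
    rw [pow_add]; ring
  rw [e]
  rw [← Polynomial.C_eq_natCast, Polynomial.coeff_C_mul]
  rw [show B = (B - h) + h by omega, Polynomial.coeff_X_pow_mul,
    Polynomial.coeff_one_add_X_pow]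
  congr 3
  omega

lemma one_add_X_pow_two_pow (s : ℕ) :
    (1 + X : (ZMod 2)[X]) ^ (2^s) = 1 + X ^ (2^s) := by
  rw [add_pow_char_pow]
  simp

lemma one_add_X_pow_two_mul (a : ℕ) :
    (1 + X : (ZMod 2)[X]) ^ (2*a) = uu ^ a := by
  rw [pow_mul, add_pow_char]
  simp [uu]

lemma sum_par (p a M : ℕ) (hp : 1 ≤ p) (hbound : a + M + 2 ≤ 2^p) :
    (∑ s ∈ Finset.range p,
        (((1 + X : (ZMod 2)[X]) ^ (2^s + 2*a)) * qq ^ M).coeff (2^p + M + a - 2^s))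
      = if a = 0 then 1 else 0 := by
  set g : (ZMod 2)[X] := uu ^ a * qq ^ M with hg
  set D := 2^p + M + a with hD
  have hgdeg : g.natDegree ≤ 2*a + 2*M := by
    calc g.natDegree ≤ (uu^a).natDegree + (qq^M).natDegree := Polynomial.natDegree_mul_le
    _ ≤ 2*a + 2*M := by
        apply Nat.add_le_add _ (qq_pow_natDegree M)
        calc (uu^a).natDegree ≤ a * uu.natDegree := Polynomial.natDegree_pow_le
        _ ≤ a * 2 := Nat.mul_le_mul_left a uu_natDegree
        _ = 2 * a := Nat.mul_comm a 2
  have hterm : ∀ s ∈ Finset.range p,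
      (((1 + X : (ZMod 2)[X]) ^ (2^s + 2*a)) * qq ^ M).coeff (D - 2^s)
        = g.coeff (D - 2^s) - g.coeff (D - 2^(s+1)) := by
    intro s hs
    simp only [Finset.mem_range] at hs
    have h2s : 2^(s+1) ≤ 2^p := Nat.pow_le_pow_right (by norm_num) (by omega)
    have hDs : 2^(s+1) ≤ D := by omega
    rw [pow_add, one_add_X_pow_two_pow, one_add_X_pow_two_mul]
    have e : (1 + X ^ 2^s) * uu ^ a * qq ^ M = g + X ^ (2^s) * g := by
      rw [hg]; ring
    rw [e, Polynomial.coeff_add]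
    have e2 : (X ^ (2^s) * g).coeff (D - 2^s) = g.coeff (D - 2^(s+1)) := by
      rw [show D - 2^s = (D - 2^(s+1)) + 2^s by
          have : 2^(s+1) = 2^s + 2^s := by rw [pow_succ]; ring
          omega,
        Polynomial.coeff_X_pow_mul]
    rw [e2, CharTwo.sub_eq_add]
  rw [Finset.sum_congr rfl hterm, Finset.sum_range_sub' (fun s => g.coeff (D - 2^s)) p]
  have hF0 : g.coeff (D - 2^0) = 0 := by
    apply Polynomial.coeff_eq_zero_of_natDegree_lt
    calc g.natDegree ≤ 2*a + 2*M := hgdeg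
    _ < D - 2^0 := by
        simp only [pow_zero, hD]
        omega
  have hFp : g.coeff (D - 2^p) = if a = 0 then 1 else 0 := by
    rw [show D - 2^p = a + M by omega, ← main_coeff a M, hg]
  rw [hF0, hFp, zero_sub, CharTwo.neg_eq]

/-- Lemma: let `p ≥ 1` and `n = 2^p + m` with `0 < m ≤ 2^p`. For all integers `k, i` with
`2 ≤ k ≤ m` and `1 ≤ i ≤ k − 1`, the sum
`Σ_{s=0}^{p−1} Σ_{h=0}^{m−k} C(2^s + 2(i−1) + h, n − 2^s + (i−1) − k − h) · C(m−k, h)`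
is odd if `i = 1` and even if `2 ≤ i ≤ k − 1`. -/
theorem sum_odd_iff_i_eq_one (p m n k i : ℕ) (hp : 1 ≤ p)
    (hn : n = 2 ^ p + m) (hm0 : 0 < m) (hm : m ≤ 2 ^ p)
    (hk2 : 2 ≤ k) (hkm : k ≤ m) (hi1 : 1 ≤ i) (hik : i ≤ k - 1)
    (S : ℕ)
    (hS : S = ∑ s ∈ Finset.range p, ∑ h ∈ Finset.range (m - k + 1),
      chooseZ (2 ^ s + 2 * (i - 1) + h)
          ((n : ℤ) - 2 ^ s + ((i : ℤ) - 1) - k - h) * (m - k).choose h) :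
    (i = 1 → Odd S) ∧ (2 ≤ i → Even S) := by
  set a := i - 1 with ha
  set M := m - k with hM
  have hik' : i ≤ k - 1 := hik
  have hbound : a + M + 2 ≤ 2^p := by omega
  have hS' : S = ∑ s ∈ Finset.range p, ∑ h ∈ Finset.range (M + 1),
      (2^s + 2*a + h).choose (2^p + M + a - 2^s - h) * M.choose h := by
    rw [hS]
    apply Finset.sum_congr rfl
    intro s hs
    simp only [Finset.mem_range] at hs
    apply Finset.sum_congr rfl
    intro h hh
    simp only [Finset.mem_range] at hh
    have h2s : 2^s < 2^p := Nat.pow_lt_pow_right (by norm_num) hs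
    congr 1
    have hc2 : ((2:ℤ))^s = ((2^s : ℕ) : ℤ) := by push_cast; ring
    have harg : (n : ℤ) - 2 ^ s + ((i : ℤ) - 1) - k - h
        = ((2^p + M + a - 2^s - h : ℕ) : ℤ) := by
      subst hn
      rw [hc2]
      generalize hQ : (2:ℕ)^s = Q at h2s ⊢
      generalize hP : (2:ℕ)^p = P at h2s ⊢
      push_cast
      omega
    rw [chooseZ, harg, if_pos (by positivity)]
    simp
  have hcast : (S : ZMod 2) = if a = 0 then 1 else 0 := by
    rw [hS', ← sum_par p a M hp hbound]
    push_cast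
    apply Finset.sum_congr rfl
    intro s hs
    simp only [Finset.mem_range] at hs
    have h2s : 2^s < 2^p := Nat.pow_lt_pow_right (by norm_num) hs
    rw [inner_coeff (2^s + 2*a) (2^p + M + a - 2^s) M (by omega)]
    apply Finset.sum_congr rfl
    intro h hh
    ring
  constructor
  · intro hi
    have ha0 : a = 0 := by omega
    rw [ha0, if_pos rfl] at hcast
    rw [Nat.odd_iff]
    by_contra hodd
    have : S % 2 = 0 := by omega
    have h2 : (2 : ℕ) ∣ S := by omega
    have : (S : ZMod 2) = 0 := (ZMod.natCast_eq_zero_iff S 2).mpr h2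
    rw [hcast] at this
    exact one_ne_zero this
  · intro hi
    have ha0 : a ≠ 0 := by omega
    rw [if_neg ha0] at hcast
    have h2 : (2 : ℕ) ∣ S := (ZMod.natCast_eq_zero_iff S 2).mp hcast
    rw [Nat.even_iff]
    omega
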